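/- Let ν be an s-finite measure on α and η a σ-finite measure on β. Let f : α → ℝ≥0∞ be measurable and let g : α × β → ℝ≥0∞ be measurable, and let κ : α → Measure β be the measurable family κ w = η.withDensity (fun z => g (w, z)). Then (ν.withDensity f).bind κ = η.withDensity (fun z => ∫⁻ w, f w * g (w, z) ∂ν). In words: drawing an argument w with density f and then sampling from a distribution with density g(w,·) yields the distribution with density z ↦ ∫ f(w)·g(w,z) dw. -/

import Mathlib

open MeasureTheory
open scoped ENNReal

theorem bind_withDensity_random_rnd {α β : Type*} [MeasurableSpace α] [MeasurableSpace β]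
    (ν : Measure α) [SFinite ν] (η : Measure β) [SigmaFinite η]
    (f : α → ℝ≥0∞) (hf : Measurable f)
    (g : α × β → ℝ≥0∞) (hg : Measurable g) :
    (ν.withDensity f).bind (fun w => η.withDensity (fun z => g (w, z))) =
      η.withDensity (fun z => ∫⁻ w, f w * g (w, z) ∂ν) := by
  ext s hs
  have hmeas : Measurable fun w => η.withDensity (fun z => g (w, z)) s := by
    simp_rw [withDensity_apply _ hs]
    exact Measurable.lintegral_prod_right hg
  have hkm : Measurable fun w => η.withDensity (fun z => g (w, z)) :=
    Measure.measurable_of_measurable_coe _ fun t ht => by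
      simp_rw [withDensity_apply _ ht]
      exact Measurable.lintegral_prod_right hg
  rw [Measure.bind_apply hs hkm.aemeasurable, withDensity_apply _ hs,
    lintegral_withDensity_eq_lintegral_mul _ hf hmeas]
  simp only [Pi.mul_apply, withDensity_apply _ hs]
  have key : ∀ a, f a * ∫⁻ z in s, g (a, z) ∂η = ∫⁻ z in s, f a * g (a, z) ∂η := fun a =>
    (lintegral_const_mul (f a) (hg.comp measurable_prodMk_left)).symm
  simp_rw [key]
  exact lintegral_lintegral_swap
    (((hf.comp measurable_fst).mul hg).aemeasurable)
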